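/- Let X, Y be complex Hilbert spaces and Yₙ a finite-dimensional complex inner product space. Let T : X → Y and Tₙ : X → Yₙ be bounded linear operators. Let x† ∈ X, let x_n† ∈ X belong to the orthogonal complement of ker Tₙ with Tₙ x_n† = Tₙ x†, and for α > 0 let x_α be the unique solution of (T*T + αI)x_α = T*T x†. If εₙ > 0 satisfies ‖T*T − Tₙ*Tₙ‖ ≤ εₙ, then ‖x† − x_n†‖ ≤ (1 + εₙ/α)·‖x† − x_α‖ for every α > 0. -/

import Mathlib

open ContinuousLinearMap

theorem discrete_regularization_error_estimate
    {X Y Yn : Type*} [NormedAddCommGroup X] [InnerProductSpace ℂ X] [CompleteSpace X]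
    [NormedAddCommGroup Y] [InnerProductSpace ℂ Y] [CompleteSpace Y]
    [NormedAddCommGroup Yn] [InnerProductSpace ℂ Yn] [FiniteDimensional ℂ Yn]
    (T : X →L[ℂ] Y) (Tn : X →L[ℂ] Yn) (xdag xndag : X)
    (hmem : xndag ∈ (LinearMap.ker (Tn : X →ₗ[ℂ] Yn))ᗮ)
    (heq : Tn xndag = Tn xdag)
    (xa : ℝ → X)
    (hxa : ∀ α > (0 : ℝ),
      (adjoint T ∘L T) (xa α) + α • xa α = (adjoint T ∘L T) xdag)
    (ε : ℝ) (hε : 0 < ε)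
    (hnorm : ‖(adjoint T ∘L T) - (adjoint Tn ∘L Tn)‖ ≤ ε) :
    ∀ α > (0 : ℝ), ‖xdag - xndag‖ ≤ (1 + ε / α) * ‖xdag - xa α‖ := by
  intro α hα
  set v := xdag - xndag with hv
  set w := xdag - xa α with hw
  set D := (adjoint T ∘L T) - (adjoint Tn ∘L Tn) with hD
  have hvK : Tn v = 0 := by simp [hv, heq]
  have hz : (inner ℂ v xndag : ℂ) = 0 :=
    Submodule.inner_right_of_mem_orthogonal (LinearMap.mem_ker.mpr hvK) hmem
  have hTTw : (adjoint T ∘L T) w = (α : ℂ) • xa α := by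
    have h := hxa α hα
    have h2 : (adjoint T ∘L T) w
        = (adjoint T ∘L T) xdag - (adjoint T ∘L T) (xa α) := map_sub _ _ _
    rw [h2, ← h]
    simp [Complex.coe_smul]
  have hTn0 : (inner ℂ v ((adjoint Tn ∘L Tn) w) : ℂ) = 0 := by
    rw [comp_apply, adjoint_inner_right, hvK, inner_zero_left]
  have hDw : (inner ℂ v ((adjoint T ∘L T) w) : ℂ) = inner ℂ v (D w) := by
    have : D w = (adjoint T ∘L T) w - (adjoint Tn ∘L Tn) w := by
      simp [hD]
    rw [this, inner_sub_right, hTn0, sub_zero]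
  have hxaInner : (inner ℂ v (xa α) : ℂ) = (1 / (α : ℂ)) * inner ℂ v (D w) := by
    have hα' : (α : ℂ) ≠ 0 := by exact_mod_cast ne_of_gt hα
    have : (α : ℂ) * inner ℂ v (xa α) = inner ℂ v (D w) := by
      rw [← hDw, hTTw, inner_smul_right]
    field_simp
    linear_combination this
  have hsum : v = w + xa α - xndag := by rw [hv, hw]; abel
  have hsplit : (inner ℂ v v : ℂ) = inner ℂ v w + (1 / (α : ℂ)) * inner ℂ v (D w) := by
    calc (inner ℂ v v : ℂ) = inner ℂ v (w + xa α - xndag) := by rw [hsum]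
      _ = inner ℂ v w + inner ℂ v (xa α) - inner ℂ v xndag := by
          rw [inner_sub_right, inner_add_right]
      _ = inner ℂ v w + (1 / (α : ℂ)) * inner ℂ v (D w) := by
          rw [hz, sub_zero, hxaInner]
  have hDwnorm : ‖D w‖ ≤ ε * ‖w‖ :=
    le_trans (D.le_opNorm w) (mul_le_mul_of_nonneg_right hnorm (norm_nonneg w))
  have hns : ‖v‖ ^ 2 = ‖(inner ℂ v v : ℂ)‖ := by
    rw [inner_self_eq_norm_sq_to_K]
    simp
  have hbound : ‖v‖ ^ 2 ≤ ‖v‖ * ((1 + ε / α) * ‖w‖) := by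
    rw [hns, hsplit]
    have A : ‖(inner ℂ v w : ℂ)‖ ≤ ‖v‖ * ‖w‖ := norm_inner_le_norm v w
    have B : ‖(1 / (α : ℂ)) * inner ℂ v (D w)‖ ≤ (1 / α) * (‖v‖ * (ε * ‖w‖)) := by
      rw [norm_mul]
      have h1 : ‖(1 / (α : ℂ))‖ = 1 / α := by
        simp [abs_of_pos hα]
      rw [h1]
      refine mul_le_mul_of_nonneg_left ?_ (by positivity)
      exact le_trans (norm_inner_le_norm v (D w))
        (mul_le_mul_of_nonneg_left hDwnorm (norm_nonneg v))
    calc ‖(inner ℂ v w : ℂ) + (1 / (α : ℂ)) * inner ℂ v (D w)‖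
        ≤ ‖(inner ℂ v w : ℂ)‖ + ‖(1 / (α : ℂ)) * inner ℂ v (D w)‖ := norm_add_le _ _
      _ ≤ ‖v‖ * ‖w‖ + (1 / α) * (‖v‖ * (ε * ‖w‖)) := add_le_add A B
      _ = ‖v‖ * ((1 + ε / α) * ‖w‖) := by
          field_simp
  rcases eq_or_ne ‖v‖ 0 with h0 | h0
  · rw [h0]
    positivity
  · have hvpos : 0 < ‖v‖ := lt_of_le_of_ne (norm_nonneg v) (Ne.symm h0)
    nlinarith [hbound]
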